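/- arXiv:0807.1271 — 7 statements merged into one kernel-verified Lean document; each statement's English description precedes it below -/
import Mathlib

section
/- Let K ∈ ℕ, let λ₀, …, λ_K be nonnegative reals with W := Σ_{m=0}^K λ_m > 0, let x₀, …, x_K and c be real numbers, and let η ∈ (0, 1). If Re( e^{−ic} · (1/W) Σ_{m=0}^K λ_m e^{i x_m} ) ≥ 1 − η, then Σ_{m=0}^K λ_m · d(x_m − c)² ≤ (π²/2) · W · η. -/
/-- The distance from a real number to the set `2πℤ`. -/
noncomputable def distToTwoPiZ (y : ℝ) : ℝ := ⨅ j : ℤ, |y - 2 * Real.pi * j|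

lemma distToTwoPiZ_sq_le (y : ℝ) :
    distToTwoPiZ y ^ 2 ≤ (Real.pi ^ 2 / 2) * (1 - Real.cos y) := by
  have hπ := Real.pi_pos
  set j : ℤ := round (y / (2 * Real.pi)) with hj
  set r : ℝ := y - 2 * Real.pi * j with hr
  have hrle : |r| ≤ Real.pi := by
    have h1 : |y / (2 * Real.pi) - j| ≤ 1 / 2 := by
      simpa [hj] using abs_sub_round (y / (2 * Real.pi))
    have h2 : r = 2 * Real.pi * (y / (2 * Real.pi) - j) := by
      field_simp [hr]
      exact hr
    rw [h2, abs_mul, abs_of_pos (by positivity : (0:ℝ) < 2 * Real.pi)]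
    nlinarith
  have hbdd : BddBelow (Set.range fun j : ℤ => |y - 2 * Real.pi * j|) :=
    ⟨0, by rintro z ⟨k, rfl⟩; positivity⟩
  have hd_le : distToTwoPiZ y ≤ |r| := ciInf_le hbdd j
  have hd_nonneg : 0 ≤ distToTwoPiZ y := le_ciInf fun k => abs_nonneg _
  have hcos : Real.cos r = Real.cos y := by
    have h3 : r = y - j * (2 * Real.pi) := by rw [hr]; ring
    rw [h3, Real.cos_sub_int_mul_two_pi]
  have hkey : 2 / Real.pi ^ 2 * r ^ 2 ≤ 1 - Real.cos r := by
    linarith [Real.cos_le_one_sub_mul_cos_sq hrle]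
  have hsq : distToTwoPiZ y ^ 2 ≤ r ^ 2 := by
    calc distToTwoPiZ y ^ 2 ≤ |r| ^ 2 := pow_le_pow_left₀ hd_nonneg hd_le 2
      _ = r ^ 2 := sq_abs r
  have hr2 : r ^ 2 = Real.pi ^ 2 / 2 * (2 / Real.pi ^ 2 * r ^ 2) := by
    field_simp
  calc distToTwoPiZ y ^ 2 ≤ r ^ 2 := hsq
    _ = Real.pi ^ 2 / 2 * (2 / Real.pi ^ 2 * r ^ 2) := hr2
    _ ≤ Real.pi ^ 2 / 2 * (1 - Real.cos r) :=
        mul_le_mul_of_nonneg_left hkey (by positivity)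
    _ = Real.pi ^ 2 / 2 * (1 - Real.cos y) := by rw [hcos]

theorem weighted_squared_alignment_error_bound
    (K : ℕ) (lam : Fin (K + 1) → ℝ) (hlam : ∀ m, 0 ≤ lam m)
    (W : ℝ) (hW : W = ∑ m, lam m) (hWpos : 0 < W)
    (x : Fin (K + 1) → ℝ) (c : ℝ) (η : ℝ) (hη : η ∈ Set.Ioo (0 : ℝ) 1)
    (h : 1 - η ≤
      (Complex.exp (-Complex.I * (c : ℂ)) *
        ((1 / W : ℝ) * ∑ m, (lam m : ℂ) * Complex.exp (Complex.I * (x m : ℂ)))).re) :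
    ∑ m, lam m * distToTwoPiZ (x m - c) ^ 2 ≤ (Real.pi ^ 2 / 2) * W * η := by
  have hπ := Real.pi_pos
  have hre : (Complex.exp (-Complex.I * (c : ℂ)) *
      ((1 / W : ℝ) * ∑ m, (lam m : ℂ) * Complex.exp (Complex.I * (x m : ℂ)))).re
      = (1 / W) * ∑ m, lam m * Real.cos (x m - c) := by
    rw [Finset.mul_sum, Finset.mul_sum, Finset.mul_sum, Complex.re_sum]
    rw [Finset.sum_congr rfl]
    intro m _
    have he : Complex.exp (-Complex.I * (c : ℂ)) * Complex.exp (Complex.I * (x m : ℂ))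
        = Complex.exp (((x m - c : ℝ) : ℂ) * Complex.I) := by
      rw [← Complex.exp_add]; congr 1; push_cast; ring
    have h2 : Complex.exp (-Complex.I * (c : ℂ)) *
        ((1 / W : ℝ) * ((lam m : ℂ) * Complex.exp (Complex.I * (x m : ℂ))))
        = ((1 / W * lam m : ℝ) : ℂ) * Complex.exp (((x m - c : ℝ) : ℂ) * Complex.I) := by
      rw [← he]; push_cast; ring
    rw [h2, Complex.re_ofReal_mul, Complex.exp_ofReal_mul_I_re]
    ring
  rw [hre] at h
  have hcos_sum : W * (1 - η) ≤ ∑ m, lam m * Real.cos (x m - c) := by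
    have h3 := mul_le_mul_of_nonneg_left h hWpos.le
    rw [← mul_assoc, mul_one_div, div_self hWpos.ne', one_mul] at h3
    exact h3
  have hpt : ∀ m : Fin (K + 1), lam m * distToTwoPiZ (x m - c) ^ 2
      ≤ (Real.pi ^ 2 / 2) * (lam m * (1 - Real.cos (x m - c))) := by
    intro m
    have h4 := distToTwoPiZ_sq_le (x m - c)
    have hl := hlam m
    nlinarith
  calc ∑ m, lam m * distToTwoPiZ (x m - c) ^ 2
      ≤ ∑ m, (Real.pi ^ 2 / 2) * (lam m * (1 - Real.cos (x m - c))) :=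
        Finset.sum_le_sum fun m _ => hpt m
    _ = (Real.pi ^ 2 / 2) * (W - ∑ m, lam m * Real.cos (x m - c)) := by
        rw [← Finset.mul_sum]
        congr 1
        rw [hW, ← Finset.sum_sub_distrib]
        exact Finset.sum_congr rfl fun m _ => by ring
    _ ≤ (Real.pi ^ 2 / 2) * W * η := by
        rw [mul_assoc]
        exact mul_le_mul_of_nonneg_left (by linarith) (by positivity)
end

section
/- Let K ∈ ℕ, let λ₀, …, λ_K be nonnegative reals with W := Σ_{m=0}^K λ_m > 0, let x₀, …, x_K and c be real numbers, let η ∈ (0, 1) and δ ∈ (0, 1/2). If Re( e^{−ic} · (1/W) Σ_{m=0}^K λ_m e^{i x_m} ) ≥ 1 − η, then the weighted count of badly aligned indices satisfies Σ_{m=0}^K λ_m · 𝟙{ d(x_m − c) ≥ η^δ } ≤ (π²/2) · W · η^{1−2δ}. -/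
lemma cos_le_of_dist (y a : ℝ) (ha : 0 ≤ a) (hd : a ≤ distToTwoPiZ y) :
    2 * a ^ 2 / Real.pi ^ 2 ≤ 1 - Real.cos y := by
  set j : ℤ := round (y / (2 * Real.pi)) with hj
  have hpi := Real.pi_pos
  have habs : |y - 2 * Real.pi * j| ≤ Real.pi := by
    have h1 : |y / (2 * Real.pi) - j| ≤ 1 / 2 := abs_sub_round _
    have h2 : y - 2 * Real.pi * j = (2 * Real.pi) * (y / (2 * Real.pi) - j) := by
      field_simp
    rw [h2, abs_mul, abs_of_pos (by positivity : (0:ℝ) < 2 * Real.pi)]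
    nlinarith
  have hle : distToTwoPiZ y ≤ |y - 2 * Real.pi * j| := by
    apply ciInf_le ⟨0, ?_⟩ j
    rintro z ⟨k, rfl⟩
    exact abs_nonneg _
  have hcos : Real.cos y = Real.cos (y - 2 * Real.pi * j) := by
    rw [show y - 2 * Real.pi * j = y - (j : ℝ) * (2 * Real.pi) by ring,
      Real.cos_sub_int_mul_two_pi]
  have hb := Real.cos_le_one_sub_mul_cos_sq habs
  have ha2 : a ^ 2 ≤ (y - 2 * Real.pi * j) ^ 2 := by
    have := pow_le_pow_left₀ ha (hd.trans hle) 2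
    simpa [sq_abs] using this
  have h3 : 2 / Real.pi ^ 2 * a ^ 2 ≤ 2 / Real.pi ^ 2 * (y - 2 * Real.pi * j) ^ 2 :=
    mul_le_mul_of_nonneg_left ha2 (by positivity)
  have heq : 2 * a ^ 2 / Real.pi ^ 2 = 2 / Real.pi ^ 2 * a ^ 2 := by ring
  rw [hcos, heq]
  linarith

theorem weighted_count_badly_aligned_bound
    (K : ℕ) (lam : Fin (K + 1) → ℝ) (hlam : ∀ m, 0 ≤ lam m)
    (W : ℝ) (hW : W = ∑ m, lam m) (hWpos : 0 < W)
    (x : Fin (K + 1) → ℝ) (c : ℝ) (η δ : ℝ)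
    (hη : η ∈ Set.Ioo (0 : ℝ) 1) (hδ : δ ∈ Set.Ioo (0 : ℝ) (1 / 2))
    (h : 1 - η ≤
      (Complex.exp (-Complex.I * (c : ℂ)) *
        ((1 / W : ℝ) * ∑ m, (lam m : ℂ) * Complex.exp (Complex.I * (x m : ℂ)))).re) :
    ∑ m, lam m * (if η ^ δ ≤ distToTwoPiZ (x m - c) then (1 : ℝ) else 0) ≤
      (Real.pi ^ 2 / 2) * W * η ^ (1 - 2 * δ) := by
  have hpi := Real.pi_pos
  set a : ℝ := η ^ δ with haa
  have ha : 0 < a := Real.rpow_pos_of_pos hη.1 δ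
  -- compute the real part
  have hre : (Complex.exp (-Complex.I * (c : ℂ)) *
        ((1 / W : ℝ) * ∑ m, (lam m : ℂ) * Complex.exp (Complex.I * (x m : ℂ)))).re
      = (1 / W) * ∑ m, lam m * Real.cos (x m - c) := by
    have hterm : Complex.exp (-Complex.I * (c : ℂ)) *
        ((1 / W : ℝ) * ∑ m, (lam m : ℂ) * Complex.exp (Complex.I * (x m : ℂ)))
        = ∑ m, ((1 / W * lam m : ℝ) : ℂ) * Complex.exp (((x m - c : ℝ) : ℂ) * Complex.I) := by
      rw [Finset.mul_sum, Finset.mul_sum]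
      refine Finset.sum_congr rfl fun m _ => ?_
      have he : Complex.exp (-Complex.I * (c : ℂ)) * Complex.exp (Complex.I * (x m : ℂ))
          = Complex.exp (((x m - c : ℝ) : ℂ) * Complex.I) := by
        rw [← Complex.exp_add]
        congr 1
        push_cast
        ring
      calc Complex.exp (-Complex.I * (c : ℂ)) *
            (((1 / W : ℝ) : ℂ) * ((lam m : ℂ) * Complex.exp (Complex.I * (x m : ℂ))))
          = (((1 / W : ℝ) : ℂ) * (lam m : ℂ)) *
            (Complex.exp (-Complex.I * (c : ℂ)) * Complex.exp (Complex.I * (x m : ℂ))) := by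
            ring
        _ = ((1 / W * lam m : ℝ) : ℂ) * Complex.exp (((x m - c : ℝ) : ℂ) * Complex.I) := by
            rw [he]; push_cast; ring
    rw [hterm, Complex.re_sum, Finset.mul_sum]
    refine Finset.sum_congr rfl fun m _ => ?_
    rw [Complex.re_ofReal_mul, Complex.exp_ofReal_mul_I_re]
    ring
  rw [hre] at h
  -- sum of weighted (1 - cos) is at most W * η
  have hsum : ∑ m, lam m * (1 - Real.cos (x m - c)) ≤ W * η := by
    have h2 : W * (1 - η) ≤ ∑ m, lam m * Real.cos (x m - c) := by
      calc W * (1 - η) ≤ W * ((1 / W) * ∑ m, lam m * Real.cos (x m - c)) :=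
            mul_le_mul_of_nonneg_left h hWpos.le
        _ = ∑ m, lam m * Real.cos (x m - c) := by field_simp
    have h3 : ∑ m, lam m * (1 - Real.cos (x m - c))
        = W - ∑ m, lam m * Real.cos (x m - c) := by
      rw [hW, ← Finset.sum_sub_distrib]
      exact Finset.sum_congr rfl fun m _ => by ring
    rw [h3]; nlinarith
  -- pointwise bound
  have hpt : ∀ m, lam m * (if a ≤ distToTwoPiZ (x m - c) then (1 : ℝ) else 0)
      ≤ (Real.pi ^ 2 / (2 * a ^ 2)) * (lam m * (1 - Real.cos (x m - c))) := by
    intro m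
    have hcosle : Real.cos (x m - c) ≤ 1 := Real.cos_le_one _
    by_cases hcase : a ≤ distToTwoPiZ (x m - c)
    · rw [if_pos hcase, mul_one]
      have hkey := cos_le_of_dist (x m - c) a ha.le hcase
      have h1 : 1 ≤ (Real.pi ^ 2 / (2 * a ^ 2)) * (1 - Real.cos (x m - c)) := by
        rw [div_mul_eq_mul_div, le_div_iff₀ (by positivity)]
        calc 1 * (2 * a ^ 2) = Real.pi ^ 2 * (2 * a ^ 2 / Real.pi ^ 2) := by
              field_simp
          _ ≤ Real.pi ^ 2 * (1 - Real.cos (x m - c)) :=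
              mul_le_mul_of_nonneg_left hkey (by positivity)
      calc lam m = lam m * 1 := (mul_one _).symm
        _ ≤ lam m * ((Real.pi ^ 2 / (2 * a ^ 2)) * (1 - Real.cos (x m - c))) :=
            mul_le_mul_of_nonneg_left h1 (hlam m)
        _ = (Real.pi ^ 2 / (2 * a ^ 2)) * (lam m * (1 - Real.cos (x m - c))) := by ring
    · rw [if_neg hcase, mul_zero]
      have : 0 ≤ lam m * (1 - Real.cos (x m - c)) :=
        mul_nonneg (hlam m) (by linarith)
      positivity
  calc ∑ m, lam m * (if a ≤ distToTwoPiZ (x m - c) then (1 : ℝ) else 0)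
      ≤ ∑ m, (Real.pi ^ 2 / (2 * a ^ 2)) * (lam m * (1 - Real.cos (x m - c))) :=
        Finset.sum_le_sum fun m _ => hpt m
    _ = (Real.pi ^ 2 / (2 * a ^ 2)) * ∑ m, lam m * (1 - Real.cos (x m - c)) := by
        rw [Finset.mul_sum]
    _ ≤ (Real.pi ^ 2 / (2 * a ^ 2)) * (W * η) :=
        mul_le_mul_of_nonneg_left hsum (by positivity)
    _ = (Real.pi ^ 2 / 2) * W * (η / a ^ 2) := by ring
    _ = (Real.pi ^ 2 / 2) * W * η ^ (1 - 2 * δ) := by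
        congr 1
        rw [haa, ← Real.rpow_natCast (η ^ δ) 2, ← Real.rpow_mul hη.1.le]
        rw [show δ * ((2 : ℕ) : ℝ) = 2 * δ by push_cast; ring]
        rw [Real.rpow_sub hη.1, Real.rpow_one]
end

section
/- Let K ∈ ℕ, let λ₀, …, λ_K be nonnegative reals with W := Σ_{m=0}^K λ_m > 0, let x₀, …, x_K and c be real numbers, let η ∈ (0, 1) and δ ∈ (0, 1/2). Suppose that Re( e^{−ic} · (1/W) Σ_{m=0}^K λ_m e^{i x_m} ) ≥ 1 − η, that x₀ = 0, and that λ₀ > (π²/2) · W · η^{1−2δ}. Then d(c) < η^δ. -/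
theorem reference_weight_forces_small_offset
    (K : ℕ) (lam : Fin (K + 1) → ℝ) (hlam : ∀ m, 0 ≤ lam m)
    (W : ℝ) (hW : W = ∑ m, lam m) (hWpos : 0 < W)
    (x : Fin (K + 1) → ℝ) (c : ℝ) (η δ : ℝ)
    (hη : η ∈ Set.Ioo (0 : ℝ) 1) (hδ : δ ∈ Set.Ioo (0 : ℝ) (1 / 2))
    (h : 1 - η ≤
      (Complex.exp (-Complex.I * (c : ℂ)) *
        ((1 / W : ℝ) * ∑ m, (lam m : ℂ) * Complex.exp (Complex.I * (x m : ℂ)))).re)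
    (hx0 : x 0 = 0)
    (hlam0 : (Real.pi ^ 2 / 2) * W * η ^ (1 - 2 * δ) < lam 0) :
    distToTwoPiZ c < η ^ δ := by
  obtain ⟨hη0, hη1⟩ := hη
  obtain ⟨hδ0, hδ1⟩ := hδ
  have hπ := Real.pi_pos
  have h2π : (0:ℝ) < 2 * Real.pi := by linarith
  -- rewrite the real part as a weighted sum of cosines
  have h1 : ∀ m : Fin (K + 1),
      Complex.exp (-Complex.I * (c : ℂ)) * ((lam m : ℂ) * Complex.exp (Complex.I * (x m : ℂ)))
      = (lam m : ℂ) * Complex.exp (((x m - c : ℝ) : ℂ) * Complex.I) := by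
    intro m
    rw [mul_comm (Complex.exp _) _, mul_assoc, ← Complex.exp_add]
    push_cast
    ring_nf
  have hC : Complex.exp (-Complex.I * (c : ℂ)) *
        ((1 / W : ℝ) * ∑ m, (lam m : ℂ) * Complex.exp (Complex.I * (x m : ℂ)))
      = ((1 / W : ℝ) : ℂ) * ∑ m, (lam m : ℂ) * Complex.exp (((x m - c : ℝ) : ℂ) * Complex.I) := by
    rw [mul_left_comm]
    congr 1
    rw [Finset.mul_sum]
    exact Finset.sum_congr rfl fun m _ => h1 m
  have key : (Complex.exp (-Complex.I * (c : ℂ)) *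
        ((1 / W : ℝ) * ∑ m, (lam m : ℂ) * Complex.exp (Complex.I * (x m : ℂ)))).re
      = (1 / W) * ∑ m, lam m * Real.cos (x m - c) := by
    rw [hC, Complex.re_ofReal_mul, Complex.re_sum]
    congr 1
    refine Finset.sum_congr rfl fun m _ => ?_
    rw [Complex.re_ofReal_mul, Complex.exp_ofReal_mul_I_re]
  rw [key] at h
  -- bound the sum: each cosine is at most 1
  have hWeq : W = lam 0 + ∑ i : Fin K, lam i.succ := by rw [hW, Fin.sum_univ_succ]
  have hsum : ∑ m, lam m * Real.cos (x m - c)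
      ≤ lam 0 * Real.cos c + (W - lam 0) := by
    rw [Fin.sum_univ_succ]
    have htail : ∑ i : Fin K, lam i.succ * Real.cos (x i.succ - c) ≤ ∑ i : Fin K, lam i.succ :=
      Finset.sum_le_sum fun i _ => by
        calc lam i.succ * Real.cos (x i.succ - c) ≤ lam i.succ * 1 :=
              mul_le_mul_of_nonneg_left (Real.cos_le_one _) (hlam _)
          _ = lam i.succ := mul_one _
    have hhead : lam 0 * Real.cos (x 0 - c) = lam 0 * Real.cos c := by
      rw [hx0, zero_sub, Real.cos_neg]
    rw [hhead]
    have hWt : (W - lam 0) = ∑ i : Fin K, lam i.succ := by rw [hWeq]; ring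
    rw [hWt]
    linarith
  -- deduce λ₀ (1 - cos c) ≤ W η
  have hstep1 : lam 0 * (1 - Real.cos c) ≤ W * η := by
    have h2 : 1 - η ≤ (1 / W) * (lam 0 * Real.cos c + (W - lam 0)) :=
      le_trans h (mul_le_mul_of_nonneg_left hsum (by positivity))
    rw [one_div, inv_mul_eq_div] at h2
    have h3 := (le_div_iff₀ hWpos).mp h2
    nlinarith
  -- reduce c modulo 2π
  set j : ℤ := round (c / (2 * Real.pi)) with hj
  set y : ℝ := c - 2 * Real.pi * j with hy
  have hcos : Real.cos y = Real.cos c := by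
    have hyy : y = c - (j : ℝ) * (2 * Real.pi) := by rw [hy]; ring
    rw [hyy, Real.cos_sub_int_mul_two_pi]
  have hyπ : |y| ≤ Real.pi := by
    have heq : y / (2 * Real.pi) = c / (2 * Real.pi) - (j : ℝ) := by
      rw [hy]; field_simp
    have hr : |y / (2 * Real.pi)| ≤ 1 / 2 := by
      rw [heq, hj]; exact abs_sub_round _
    rw [abs_div, abs_of_pos h2π] at hr
    have := (div_le_iff₀ h2π).mp hr
    linarith
  have hdle : distToTwoPiZ c ≤ |y| := by
    have hbdd : BddBelow (Set.range fun j : ℤ => |c - 2 * Real.pi * j|) :=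
      ⟨0, by rintro _ ⟨k, rfl⟩; exact abs_nonneg _⟩
    exact ciInf_le hbdd j
  -- 1 - cos y ≥ 2 y² / π²
  have hcosb : Real.cos y ≤ 1 - 2 / Real.pi ^ 2 * y ^ 2 :=
    Real.cos_le_one_sub_mul_cos_sq hyπ
  have hquad : lam 0 * (2 / Real.pi ^ 2 * y ^ 2) ≤ W * η := by
    have hl0 : 0 ≤ lam 0 := hlam 0
    nlinarith [hstep1, hcosb, hcos]
  -- rpow arithmetic
  have hηδpos : (0:ℝ) < η ^ δ := Real.rpow_pos_of_pos hη0 δ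
  have hsplit : η ^ (1 - 2 * δ) * (η ^ δ) ^ 2 = η := by
    have h2' : ((η ^ δ) ^ 2 : ℝ) = η ^ (δ * 2) := by
      rw [← Real.rpow_natCast (η ^ δ) 2, ← Real.rpow_mul hη0.le]
      norm_num
    rw [h2', ← Real.rpow_add hη0, show (1 - 2 * δ) + δ * 2 = 1 by ring, Real.rpow_one]
  have hy2 : y ^ 2 < (η ^ δ) ^ 2 := by
    by_cases hy0 : y = 0
    · rw [hy0]
      simpa using pow_pos hηδpos 2
    · have hy2pos : 0 < y ^ 2 := by positivity
      have hA : 0 < 2 / Real.pi ^ 2 * y ^ 2 := by positivity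
      have hB : (0:ℝ) < η ^ (1 - 2 * δ) := Real.rpow_pos_of_pos hη0 _
      have hchain : (Real.pi ^ 2 / 2) * W * η ^ (1 - 2 * δ) * (2 / Real.pi ^ 2 * y ^ 2)
          < W * η := lt_of_lt_of_le (mul_lt_mul_of_pos_right hlam0 hA) hquad
      have hsimp : (Real.pi ^ 2 / 2) * W * η ^ (1 - 2 * δ) * (2 / Real.pi ^ 2 * y ^ 2)
          = W * η ^ (1 - 2 * δ) * y ^ 2 := by
        field_simp
      rw [hsimp] at hchain
      have hηeq : W * η ^ (1 - 2 * δ) * (η ^ δ) ^ 2 = W * η := by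
        rw [mul_assoc, hsplit]
      have hchain2 : W * η ^ (1 - 2 * δ) * y ^ 2 < W * η ^ (1 - 2 * δ) * (η ^ δ) ^ 2 :=
        hchain.trans_eq hηeq.symm
      have hWB : 0 < W * η ^ (1 - 2 * δ) := by positivity
      exact lt_of_mul_lt_mul_left hchain2 hWB.le
  have habs : |y| < η ^ δ := abs_lt.mpr (abs_lt_of_sq_lt_sq' hy2 hηδpos.le)
  calc distToTwoPiZ c ≤ |y| := hdle
    _ < η ^ δ := habs
end

section
/- Let K ∈ ℕ, let λ₀, …, λ_K be nonnegative reals with W := Σ_{m=0}^K λ_m > 0, and let x₀, …, x_K be real numbers whose weighted mean vanishes: Σ_{m=0}^K λ_m x_m = 0. Then | | (1/W) Σ_{m=0}^K λ_m e^{i x_m} |² − 1 | ≤ (1/W) Σ_{m=0}^K λ_m x_m². -/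
open Finset

theorem second_order_taylor_bound_centered
    (K : ℕ) (lam : Fin (K + 1) → ℝ) (hlam : ∀ m, 0 ≤ lam m)
    (W : ℝ) (hW : W = ∑ m, lam m) (hWpos : 0 < W)
    (x : Fin (K + 1) → ℝ) (hmean : ∑ m, lam m * x m = 0) :
    |‖((1 / W : ℝ) * ∑ m, (lam m : ℂ) * Complex.exp (Complex.I * (x m : ℂ)) : ℂ)‖ ^ 2 - 1| ≤
      (1 / W) * ∑ m, lam m * x m ^ 2 := by
  set A : ℝ := ∑ m, lam m * Real.cos (x m) with hA
  set B : ℝ := ∑ m, lam m * Real.sin (x m) with hB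
  set T : ℝ := ∑ m, lam m * x m ^ 2 with hT
  have hS : (∑ m, (lam m : ℂ) * Complex.exp (Complex.I * (x m : ℂ))) = (A : ℂ) + (B : ℂ) * Complex.I := by
    rw [hA, hB]
    push_cast
    rw [Finset.sum_mul, ← Finset.sum_add_distrib]
    refine Finset.sum_congr rfl fun m _ => ?_
    rw [mul_comm Complex.I, Complex.exp_mul_I, ← Complex.ofReal_cos, ← Complex.ofReal_sin]
    ring
  have habs2 : ‖((1 / W : ℝ) * ∑ m, (lam m : ℂ) * Complex.exp (Complex.I * (x m : ℂ)) : ℂ)‖ ^ 2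
      = (A ^ 2 + B ^ 2) / W ^ 2 := by
    rw [hS, norm_mul, mul_pow, Complex.sq_norm, Complex.sq_norm]
    simp [Complex.normSq_apply]
    field_simp
  have hdouble : W ^ 2 - (A ^ 2 + B ^ 2)
      = ∑ m, ∑ n, lam m * lam n * (1 - Real.cos (x m - x n)) := by
    have hW2 : W ^ 2 = ∑ m, ∑ n, lam m * lam n := by
      rw [hW, sq, Finset.sum_mul_sum]
    have hAB : A ^ 2 + B ^ 2 = ∑ m, ∑ n, lam m * lam n * Real.cos (x m - x n) := by
      rw [hA, hB, sq, sq, Finset.sum_mul_sum, Finset.sum_mul_sum, ← Finset.sum_add_distrib]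
      refine Finset.sum_congr rfl fun m _ => ?_
      rw [← Finset.sum_add_distrib]
      refine Finset.sum_congr rfl fun n _ => ?_
      rw [Real.cos_sub]
      ring
    rw [hW2, hAB, ← Finset.sum_sub_distrib]
    refine Finset.sum_congr rfl fun m _ => ?_
    rw [← Finset.sum_sub_distrib]
    refine Finset.sum_congr rfl fun n _ => ?_
    ring
  have hnn : ∀ m n : Fin (K+1), 0 ≤ lam m * lam n * (1 - Real.cos (x m - x n)) := by
    intro m n
    have := Real.cos_le_one (x m - x n)
    exact mul_nonneg (mul_nonneg (hlam m) (hlam n)) (by linarith)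
  have hle1 : A ^ 2 + B ^ 2 ≤ W ^ 2 := by
    nlinarith [Finset.sum_nonneg (fun m (_ : m ∈ Finset.univ) =>
      Finset.sum_nonneg (fun n (_ : n ∈ Finset.univ) => hnn m n))]
  have expand : ∑ m, ∑ n, lam m * lam n * ((x m - x n) ^ 2 / 2) = T * W := by
    have h1 : ∀ m : Fin (K+1), ∀ n : Fin (K+1), lam m * lam n * ((x m - x n) ^ 2 / 2)
        = (lam m * x m ^ 2) * lam n / 2 + lam m * (lam n * x n ^ 2) / 2
          - (lam m * x m) * (lam n * x n) := fun m n => by ring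
    have h2 : ∀ m : Fin (K+1), ∑ n, lam m * lam n * ((x m - x n) ^ 2 / 2)
        = (lam m * x m ^ 2) * W / 2 + lam m * T / 2 := by
      intro m
      rw [Finset.sum_congr rfl fun n _ => h1 m n]
      rw [Finset.sum_sub_distrib, Finset.sum_add_distrib]
      simp only [← Finset.sum_div, ← Finset.mul_sum]
      rw [hmean, ← hW, ← hT]
      ring
    rw [Finset.sum_congr rfl fun m _ => h2 m]
    rw [Finset.sum_add_distrib, ← Finset.sum_div, ← Finset.sum_mul, ← Finset.sum_div,
      ← Finset.sum_mul, ← hT, ← hW]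
    ring
  have hkey : W ^ 2 - (A ^ 2 + B ^ 2) ≤ W * T := by
    rw [hdouble]
    have hbound : ∑ m, ∑ n, lam m * lam n * (1 - Real.cos (x m - x n))
        ≤ ∑ m, ∑ n, lam m * lam n * ((x m - x n) ^ 2 / 2) := by
      refine Finset.sum_le_sum fun m _ => Finset.sum_le_sum fun n _ => ?_
      have h1 := Real.one_sub_sq_div_two_le_cos (x := x m - x n)
      have h2 : 0 ≤ lam m * lam n := mul_nonneg (hlam m) (hlam n)
      nlinarith
    linarith [hbound, expand]
  rw [habs2]
  have hW2pos : 0 < W ^ 2 := by positivity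
  have h1 : (A ^ 2 + B ^ 2) / W ^ 2 ≤ 1 := by rw [div_le_one hW2pos]; exact hle1
  rw [abs_of_nonpos (by linarith), neg_sub]
  have h2 : 1 - (A ^ 2 + B ^ 2) / W ^ 2 = (W ^ 2 - (A ^ 2 + B ^ 2)) / W ^ 2 := by
    field_simp
  rw [h2, div_le_iff₀ hW2pos]
  have h3 : 1 / W * T * W ^ 2 = W * T := by field_simp
  linarith
end

section
/- Let (Ω, 𝓕, ℙ) be a probability space, let (θ_m)_{m ≥ 0} be independent and identically distributed real-valued random variables taking values in [0, 2π], and let g : ℝ → ℝ be Lipschitz. Let (θ̂_m)_{m ≥ 0} be real-valued random variables taking values in [0, 2π] such that (1/(M+1)) Σ_{m=0}^M |θ̂_m − θ_m| → 0 almost surely as M → ∞. Then (1/(M+1)) Σ_{m=0}^M g(θ̂_m) → 𝔼[g(θ₀)] almost surely as M → ∞. -/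
open MeasureTheory ProbabilityTheory Filter

theorem plugin_average_tendsto_expectation
    {Ω : Type*} [MeasureSpace Ω] [IsProbabilityMeasure (ℙ : Measure Ω)]
    (θ θh : ℕ → Ω → ℝ)
    (hmeas : ∀ m, Measurable (θ m))
    (hindep : iIndepFun θ ℙ)
    (hident : ∀ m, IdentDistrib (θ m) (θ 0) ℙ ℙ)
    (hrange : ∀ m ω, θ m ω ∈ Set.Icc 0 (2 * Real.pi))
    (hrangeh : ∀ m ω, θh m ω ∈ Set.Icc 0 (2 * Real.pi))
    (g : ℝ → ℝ) (L : NNReal) (hg : LipschitzWith L g)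
    (hconv : ∀ᵐ ω ∂ℙ, Tendsto
      (fun M : ℕ => (1 / (M + 1 : ℝ)) * ∑ m ∈ Finset.range (M + 1), |θh m ω - θ m ω|)
      atTop (nhds 0)) :
    ∀ᵐ ω ∂ℙ, Tendsto
      (fun M : ℕ => (1 / (M + 1 : ℝ)) * ∑ m ∈ Finset.range (M + 1), g (θh m ω))
      atTop (nhds (∫ ω', g (θ 0 ω') ∂ℙ)) := by
  have gm : Measurable g := hg.continuous.measurable
  set X : ℕ → Ω → ℝ := fun m ω => g (θ m ω) with hX
  -- integrability of X 0
  have hbound : ∀ m ω, ‖X m ω‖ ≤ |g 0| + L * (2 * Real.pi) := by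
    intro m ω
    have h1 : |g (θ m ω) - g 0| ≤ L * |θ m ω - 0| := by
      simpa [Real.dist_eq] using hg.dist_le_mul (θ m ω) 0
    have h2 : |θ m ω - 0| ≤ 2 * Real.pi := by
      rw [sub_zero, abs_of_nonneg (hrange m ω).1]
      exact (hrange m ω).2
    calc ‖g (θ m ω)‖ = |g (θ m ω) - g 0 + g 0| := by norm_num
      _ ≤ |g (θ m ω) - g 0| + |g 0| := abs_add_le _ _
      _ ≤ L * (2 * Real.pi) + |g 0| := by
          refine add_le_add (h1.trans ?_) le_rfl
          exact mul_le_mul_of_nonneg_left h2 L.2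
      _ = |g 0| + L * (2 * Real.pi) := by ring
  have hint : Integrable (X 0) ℙ := by
    refine Integrable.mono' (integrable_const (|g 0| + L * (2 * Real.pi)))
      ((gm.comp (hmeas 0)).aestronglyMeasurable) (ae_of_all _ fun ω => hbound 0 ω)
  have hXindep : Pairwise (Function.onFun (IndepFun · · ℙ) X) := fun i j hij =>
    (hindep.indepFun hij).comp gm gm
  have hXident : ∀ i, IdentDistrib (X i) (X 0) ℙ ℙ := fun i =>
    (hident i).comp gm
  have hsl := strong_law_ae_real X hint hXindep hXident
  filter_upwards [hsl, hconv] with ω hω hc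
  -- SLLN along M+1
  have hθ : Tendsto
      (fun M : ℕ => (1 / (M + 1 : ℝ)) * ∑ m ∈ Finset.range (M + 1), g (θ m ω))
      atTop (nhds (∫ ω', g (θ 0 ω') ∂ℙ)) := by
    have := hω.comp (tendsto_add_atTop_nat 1)
    refine this.congr fun M => ?_
    simp [hX, Function.comp, div_eq_inv_mul, one_div]
  -- difference tends to 0
  have hdiff : Tendsto
      (fun M : ℕ => (1 / (M + 1 : ℝ)) * ∑ m ∈ Finset.range (M + 1), g (θh m ω)
        - (1 / (M + 1 : ℝ)) * ∑ m ∈ Finset.range (M + 1), g (θ m ω))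
      atTop (nhds 0) := by
    have hLc : Tendsto (fun M : ℕ => (L : ℝ) *
        ((1 / (M + 1 : ℝ)) * ∑ m ∈ Finset.range (M + 1), |θh m ω - θ m ω|))
        atTop (nhds 0) := by
      simpa using hc.const_mul (L : ℝ)
    refine squeeze_zero_norm (fun M => ?_) hLc
    have hpos : (0:ℝ) ≤ 1 / (M + 1 : ℝ) := by positivity
    calc ‖(1 / (M + 1 : ℝ)) * ∑ m ∈ Finset.range (M + 1), g (θh m ω)
        - (1 / (M + 1 : ℝ)) * ∑ m ∈ Finset.range (M + 1), g (θ m ω)‖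
        = (1 / (M + 1 : ℝ)) * |∑ m ∈ Finset.range (M + 1), (g (θh m ω) - g (θ m ω))| := by
          rw [← mul_sub, ← Finset.sum_sub_distrib]
          rw [Real.norm_eq_abs, abs_mul, abs_of_nonneg hpos]
      _ ≤ (1 / (M + 1 : ℝ)) * ∑ m ∈ Finset.range (M + 1), |g (θh m ω) - g (θ m ω)| := by
          exact mul_le_mul_of_nonneg_left (Finset.abs_sum_le_sum_abs _ _) hpos
      _ ≤ (1 / (M + 1 : ℝ)) * ∑ m ∈ Finset.range (M + 1), (L : ℝ) * |θh m ω - θ m ω| := by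
          refine mul_le_mul_of_nonneg_left (Finset.sum_le_sum fun m _ => ?_) hpos
          simpa [Real.dist_eq] using hg.dist_le_mul (θh m ω) (θ m ω)
      _ = (L : ℝ) * ((1 / (M + 1 : ℝ)) * ∑ m ∈ Finset.range (M + 1), |θh m ω - θ m ω|) := by
          rw [← Finset.mul_sum]; ring
  have := hθ.add hdiff
  rw [add_zero] at this
  exact this.congr fun M => by ring
end

section
/- Let n ≥ 1 be an integer, let s : ℝ → ℂ be 2π-periodic and Lipschitz with constant L, let k ∈ ℤ, set t_m = 2π(m−1)/n for m = 1, …, n, and let c_s(k) = (1/n) Σ_{m=1}^n s(t_m) e^{−2πimk/n}. Let θ ∈ ℝ be such that |θ − 2πj/n| ≤ π/n for some j ∈ ℤ. Then | (1/n) Σ_{m=1}^n s(t_m − θ) e^{−2πimk/n} − e^{−ikθ} c_s(k) | ≤ (L + |k|·|c_s(k)|) · π/n. -/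
lemma exp_I_lip (x y : ℝ) : ‖Complex.exp (x*Complex.I) - Complex.exp (y*Complex.I)‖ ≤ |x - y| := by
  have h := (lipschitzWith_circleMap 0 1).dist_le_mul x y
  simp [circleMap, Complex.dist_eq, Real.dist_eq] at h
  simpa using h

lemma periodic_int_sum (n : ℕ) (f : ℤ → ℂ) (hf : ∀ m : ℤ, f (m + n) = f m) (a : ℤ) :
    ∑ m ∈ Finset.range n, f (a + m) = ∑ m ∈ Finset.range n, f m := by
  have hstep : ∀ b : ℤ, ∑ m ∈ Finset.range n, f (b + 1 + m) = ∑ m ∈ Finset.range n, f (b + m) := by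
    intro b
    have h1 : ∑ m ∈ Finset.range (n+1), f (b + m) =
        (∑ m ∈ Finset.range n, f (b + (m+1))) + f (b + 0) := Finset.sum_range_succ' _ n
    have h2 : ∑ m ∈ Finset.range (n+1), f (b + m) =
        (∑ m ∈ Finset.range n, f (b + m)) + f (b + n) := Finset.sum_range_succ _ n
    have h3 : ∀ m : ℕ, f (b + (m+1)) = f (b + 1 + m) := by intro m; ring_nf
    simp only [h3] at h1
    have h4 : f (b + n) = f (b + 0) := by simpa using hf b
    rw [h1, h4] at h2
    exact add_right_cancel h2
  induction a using Int.induction_on with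
  | zero => simp
  | succ i ih => rw [hstep]; exact ih
  | pred i ih =>
      have := hstep (-i - 1)
      simp only [sub_add_cancel] at this
      rw [← this]; exact ih


lemma sum_Icc_one_eq_range (n : ℕ) (g : ℕ → ℂ) :
    ∑ m ∈ Finset.Icc 1 n, g m = ∑ m ∈ Finset.range n, g (1 + m) := by
  induction n with
  | zero => simp
  | succ N ih =>
      rw [Finset.sum_Icc_succ_top (by omega), ih, Finset.sum_range_succ, Nat.add_comm 1 N]

theorem dft_discretization_error_bound
    (n : ℕ) (hn : 1 ≤ n) (s : ℝ → ℂ) (hper : ∀ t, s (t + 2 * Real.pi) = s t)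
    (L : ℝ) (hs : ∀ a b, ‖s a - s b‖ ≤ L * |a - b|)
    (k : ℤ) (θ : ℝ) (j : ℤ) (hθ : |θ - 2 * Real.pi * (j : ℝ) / n| ≤ Real.pi / n)
    (cs : ℂ)
    (hcs : cs = (1 / n : ℂ) * ∑ m ∈ Finset.Icc 1 n,
      s (2 * Real.pi * ((m : ℝ) - 1) / n) *
        Complex.exp (-2 * Real.pi * Complex.I * (m : ℂ) * (k : ℂ) / (n : ℂ))) :
    ‖
        ((1 / n : ℂ) * ∑ m ∈ Finset.Icc 1 n,
            s (2 * Real.pi * ((m : ℝ) - 1) / n - θ) *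
              Complex.exp (-2 * Real.pi * Complex.I * (m : ℂ) * (k : ℂ) / (n : ℂ)) -
          Complex.exp (-Complex.I * (k : ℂ) * (θ : ℂ)) * cs)‖ ≤
      (L + |(k : ℝ)| * ‖cs‖) * (Real.pi / n) := by
  have hn0 : (0:ℝ) < n := by exact_mod_cast Nat.pos_of_ne_zero (by omega)
  have hnR : (n:ℝ) ≠ 0 := ne_of_gt hn0
  have hnC : (n:ℂ) ≠ 0 := by exact_mod_cast hnR
  have hL : 0 ≤ L := by
    have := hs 0 1
    simpa using le_trans (norm_nonneg _) this
  set θb : ℝ := 2 * Real.pi * (j:ℝ) / n with hθb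
  have hε : |θ - θb| ≤ Real.pi / n := hθ
  set f : ℤ → ℂ := fun m => s (2 * Real.pi * ((m:ℝ) - 1) / n) *
      Complex.exp (-2 * Real.pi * Complex.I * (m:ℂ) * (k:ℂ) / (n:ℂ)) with hfdef
  have hf : ∀ m : ℤ, f (m + n) = f m := by
    intro m
    have harg : 2 * Real.pi * (((m + n : ℤ):ℝ) - 1) / n = 2 * Real.pi * ((m:ℝ) - 1) / n + 2 * Real.pi := by
      push_cast; field_simp; ring
    have hexp : (-2 * Real.pi * Complex.I * ((m + n : ℤ):ℂ) * (k:ℂ) / (n:ℂ))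
        = -2 * Real.pi * Complex.I * (m:ℂ) * (k:ℂ) / (n:ℂ) + (-k : ℤ) * (2 * Real.pi * Complex.I) := by
      push_cast; field_simp; ring
    simp only [hfdef, harg, hexp, hper, Complex.exp_add, Complex.exp_int_mul_two_pi_mul_I, mul_one]
  -- the sums rewritten over f
  have hsum0 : ∑ m ∈ Finset.Icc 1 n,
      s (2 * Real.pi * ((m : ℝ) - 1) / n) *
        Complex.exp (-2 * Real.pi * Complex.I * (m : ℂ) * (k : ℂ) / (n : ℂ))
      = ∑ m ∈ Finset.range n, f (1 + m) := by
    rw [sum_Icc_one_eq_range]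
    refine Finset.sum_congr rfl fun m _ => ?_
    simp only [hfdef]
    push_cast
    ring_nf
  have hshift : ∑ m ∈ Finset.Icc 1 n,
      s (2 * Real.pi * ((m : ℝ) - 1) / n - θb) *
        Complex.exp (-2 * Real.pi * Complex.I * (m : ℂ) * (k : ℂ) / (n : ℂ))
      = Complex.exp (-Complex.I * (k:ℂ) * (θb:ℂ)) * ∑ m ∈ Finset.range n, f (1 - j + m) := by
    rw [Finset.mul_sum, sum_Icc_one_eq_range]
    refine Finset.sum_congr rfl fun m _ => ?_
    have harg : 2 * Real.pi * (((1 + m : ℕ):ℝ) - 1) / n - θb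
        = 2 * Real.pi * (((1 - j + m : ℤ):ℝ) - 1) / n := by
      simp only [hθb]; push_cast; field_simp; ring
    rw [harg]
    simp only [hfdef]
    have hAeq : Complex.exp (-2 * Real.pi * Complex.I * ((1 + m : ℕ) : ℂ) * (k:ℂ) / (n:ℂ))
        = Complex.exp (-Complex.I * (k:ℂ) * (θb:ℂ)) *
          Complex.exp (-2 * Real.pi * Complex.I * (((1 - j + (m:ℤ)) : ℤ) : ℂ) * (k:ℂ) / (n:ℂ)) := by
      rw [← Complex.exp_add]
      congr 1
      simp only [hθb]
      push_cast
      field_simp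
      ring
    rw [hAeq]
    ring
  have hper1 : ∑ m ∈ Finset.range n, f (1 - j + m) = ∑ m ∈ Finset.range n, f (1 + m) := by
    rw [periodic_int_sum n f hf (1 - j), periodic_int_sum n f hf 1]
  -- B = exp(-I k θb) * cs
  have hB : (1 / n : ℂ) * ∑ m ∈ Finset.Icc 1 n,
      s (2 * Real.pi * ((m : ℝ) - 1) / n - θb) *
        Complex.exp (-2 * Real.pi * Complex.I * (m : ℂ) * (k : ℂ) / (n : ℂ))
      = Complex.exp (-Complex.I * (k:ℂ) * (θb:ℂ)) * cs := by
    rw [hshift, hper1, ← hsum0, hcs]; ring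
  set E : ℕ → ℂ := fun m => Complex.exp (-2 * Real.pi * Complex.I * (m : ℂ) * (k : ℂ) / (n : ℂ)) with hE
  have hEabs : ∀ m : ℕ, ‖E m‖ = 1 := by
    intro m
    have : (-2 * Real.pi * Complex.I * (m : ℂ) * (k : ℂ) / (n : ℂ))
        = ((-2 * Real.pi * m * k / n : ℝ) : ℂ) * Complex.I := by push_cast; ring
    rw [hE]; simp only [this]; exact Complex.norm_exp_ofReal_mul_I _
  set A := (1 / n : ℂ) * ∑ m ∈ Finset.Icc 1 n,
      s (2 * Real.pi * ((m : ℝ) - 1) / n - θ) * E m with hA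
  set B := (1 / n : ℂ) * ∑ m ∈ Finset.Icc 1 n,
      s (2 * Real.pi * ((m : ℝ) - 1) / n - θb) * E m with hBdef
  have tri : ‖A - Complex.exp (-Complex.I * (k:ℂ) * (θ:ℂ)) * cs‖
      ≤ ‖A - B‖ + ‖B - Complex.exp (-Complex.I * (k:ℂ) * (θ:ℂ)) * cs‖ :=
    norm_sub_le_norm_sub_add_norm_sub _ _ _
  have bound1 : ‖A - B‖ ≤ L * (Real.pi / n) := by
    have hAB : A - B = (1 / n : ℂ) * ∑ m ∈ Finset.Icc 1 n,
        (s (2 * Real.pi * ((m : ℝ) - 1) / n - θ) - s (2 * Real.pi * ((m : ℝ) - 1) / n - θb)) * E m := by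
      rw [hA, hBdef, ← mul_sub, ← Finset.sum_sub_distrib]
      congr 1; refine Finset.sum_congr rfl fun m _ => ?_; ring
    rw [hAB, norm_mul]
    have h1n : ‖(1 / n : ℂ)‖ = 1 / n := by
      simp
    rw [h1n]
    have hsumb : ‖∑ m ∈ Finset.Icc 1 n,
        (s (2 * Real.pi * ((m : ℝ) - 1) / n - θ) - s (2 * Real.pi * ((m : ℝ) - 1) / n - θb)) * E m‖
        ≤ ∑ m ∈ Finset.Icc 1 n, (L * (Real.pi / n)) := by
      refine le_trans (norm_sum_le _ _) (Finset.sum_le_sum fun m _ => ?_)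
      rw [norm_mul, hEabs, mul_one]
      calc ‖s (2 * Real.pi * ((m : ℝ) - 1) / n - θ) - s (2 * Real.pi * ((m : ℝ) - 1) / n - θb)‖
          ≤ L * |(2 * Real.pi * ((m : ℝ) - 1) / n - θ) - (2 * Real.pi * ((m : ℝ) - 1) / n - θb)| := hs _ _
        _ = L * |θ - θb| := by rw [show (2 * Real.pi * ((m : ℝ) - 1) / n - θ) - (2 * Real.pi * ((m : ℝ) - 1) / n - θb) = -(θ - θb) by ring, abs_neg]
        _ ≤ L * (Real.pi / n) := mul_le_mul_of_nonneg_left hε hL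
    rw [Finset.sum_const, Nat.card_Icc] at hsumb
    simp only [Nat.add_sub_cancel, nsmul_eq_mul] at hsumb
    calc 1 / (n:ℝ) * ‖_‖ ≤ 1 / n * (n * (L * (Real.pi / n))) := by
          apply mul_le_mul_of_nonneg_left hsumb (by positivity)
      _ = L * (Real.pi / n) := by field_simp
  have bound2 : ‖B - Complex.exp (-Complex.I * (k:ℂ) * (θ:ℂ)) * cs‖
      ≤ |(k:ℝ)| * ‖cs‖ * (Real.pi / n) := by
    have : B = Complex.exp (-Complex.I * (k:ℂ) * (θb:ℂ)) * cs := hB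
    rw [this, ← sub_mul, norm_mul]
    have he1 : (-Complex.I * (k:ℂ) * (θb:ℂ)) = ((-k * θb : ℝ) : ℂ) * Complex.I := by push_cast; ring
    have he2 : (-Complex.I * (k:ℂ) * (θ:ℂ)) = ((-k * θ : ℝ) : ℂ) * Complex.I := by push_cast; ring
    rw [he1, he2]
    have hlip := exp_I_lip (-k * θb) (-k * θ)
    have hexpb : ‖Complex.exp (((-k * θb : ℝ):ℂ) * Complex.I) - Complex.exp (((-k * θ : ℝ):ℂ) * Complex.I)‖ ≤ |(k:ℝ)| * (Real.pi / n) := by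
      refine le_trans hlip ?_
      rw [show (-(k:ℝ) * θb - -(k:ℝ) * θ) = (k:ℝ) * (θ - θb) by ring, abs_mul]
      exact mul_le_mul_of_nonneg_left hε (abs_nonneg _)
    calc ‖_‖ * ‖cs‖ ≤ (|(k:ℝ)| * (Real.pi / n)) * ‖cs‖ :=
          mul_le_mul_of_nonneg_right hexpb (norm_nonneg _)
      _ = |(k:ℝ)| * ‖cs‖ * (Real.pi / n) := by ring
  calc ‖A - Complex.exp (-Complex.I * (k:ℂ) * (θ:ℂ)) * cs‖
      ≤ ‖A - B‖ + ‖B - Complex.exp (-Complex.I * (k:ℂ) * (θ:ℂ)) * cs‖ := tri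
    _ ≤ L * (Real.pi / n) + |(k:ℝ)| * ‖cs‖ * (Real.pi / n) := add_le_add bound1 bound2
    _ = (L + |(k:ℝ)| * ‖cs‖) * (Real.pi / n) := by ring
end

section
/- Let K ∈ ℕ, let λ₀, …, λ_K be nonnegative reals with W := Σ_{m=0}^K λ_m > 0, let k be a nonzero real number, let θ₀, …, θ_K and α₀, …, α_K be real numbers, and let η ∈ (0, 1). Suppose c′ ∈ ℝ is such that Re( e^{−ikc′} · (1/W) Σ_{m=0}^K λ_m e^{ik(θ_m − α_m)} ) ≥ 1 − η and |k·(θ_m − α_m − c′)| ≤ π for every m. Then Σ_{m=0}^K λ_m (θ_m − α_m − c′)² ≤ (π²/2) · W · η / k². -/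
theorem sqErr_original_variables
    (K : ℕ) (lam : Fin (K + 1) → ℝ) (hlam : ∀ m, 0 ≤ lam m)
    (W : ℝ) (hW : W = ∑ m, lam m) (hWpos : 0 < W)
    (k : ℝ) (hk : k ≠ 0)
    (θ α : Fin (K + 1) → ℝ) (c' : ℝ) (η : ℝ) (hη : η ∈ Set.Ioo (0 : ℝ) 1)
    (h1 : 1 - η ≤
      (Complex.exp (-Complex.I * ((k * c' : ℝ) : ℂ)) *
        ((1 / W : ℝ) *
          ∑ m, (lam m : ℂ) * Complex.exp (Complex.I * ((k * (θ m - α m) : ℝ) : ℂ)))).re)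
    (h2 : ∀ m, |k * (θ m - α m - c')| ≤ Real.pi) :
    ∑ m, lam m * (θ m - α m - c') ^ 2 ≤ (Real.pi ^ 2 / 2) * W * η / k ^ 2 := by
  have hpi := Real.pi_pos
  have hk2 : (0:ℝ) < k ^ 2 := by positivity
  -- rewrite the real part as a weighted sum of cosines
  have hre : (Complex.exp (-Complex.I * ((k * c' : ℝ) : ℂ)) *
        ((1 / W : ℝ) *
          ∑ m, (lam m : ℂ) * Complex.exp (Complex.I * ((k * (θ m - α m) : ℝ) : ℂ)))).re
      = (1 / W) * ∑ m, lam m * Real.cos (k * (θ m - α m - c')) := by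
    rw [Finset.mul_sum, Finset.mul_sum, Complex.re_sum, Finset.mul_sum]
    refine Finset.sum_congr rfl fun m _ => ?_
    have harg : -Complex.I * ((k * c' : ℝ) : ℂ) + Complex.I * ((k * (θ m - α m) : ℝ) : ℂ)
        = ((k * (θ m - α m - c') : ℝ) : ℂ) * Complex.I := by push_cast; ring
    have : Complex.exp (-Complex.I * ((k * c' : ℝ) : ℂ)) *
        (((1 / W : ℝ) : ℂ) * ((lam m : ℂ) *
          Complex.exp (Complex.I * ((k * (θ m - α m) : ℝ) : ℂ))))
        = ((1 / W * lam m : ℝ) : ℂ) *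
          Complex.exp (((k * (θ m - α m - c') : ℝ) : ℂ) * Complex.I) := by
      rw [← harg, Complex.exp_add]; push_cast; ring
    rw [this, Complex.re_ofReal_mul, Complex.exp_ofReal_mul_I_re]
    ring
  rw [hre] at h1
  set S := ∑ m, lam m * (θ m - α m - c') ^ 2 with hS
  have hsum : ∑ m, lam m * Real.cos (k * (θ m - α m - c'))
      ≤ ∑ m, lam m * (1 - 2 / Real.pi ^ 2 * (k * (θ m - α m - c')) ^ 2) :=
    Finset.sum_le_sum fun m _ =>
      mul_le_mul_of_nonneg_left (Real.cos_le_one_sub_mul_cos_sq (h2 m)) (hlam m)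
  have expand : ∑ m, lam m * (1 - 2 / Real.pi ^ 2 * (k * (θ m - α m - c')) ^ 2)
      = W - (2 * k ^ 2 / Real.pi ^ 2) * S := by
    rw [hS, hW, Finset.mul_sum, ← Finset.sum_sub_distrib]
    refine Finset.sum_congr rfl fun m _ => ?_
    ring
  have key : 1 - η ≤ (1 / W) * (W - (2 * k ^ 2 / Real.pi ^ 2) * S) := by
    rw [← expand]
    exact h1.trans (mul_le_mul_of_nonneg_left hsum (by positivity))
  have h3 : 2 * k ^ 2 / Real.pi ^ 2 * S ≤ W * η := by
    have h4 := mul_le_mul_of_nonneg_left key hWpos.le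
    have h5 : W * ((1 / W) * (W - 2 * k ^ 2 / Real.pi ^ 2 * S))
        = W - 2 * k ^ 2 / Real.pi ^ 2 * S := by
      field_simp
    nlinarith
  rw [le_div_iff₀ hk2]
  calc S * k ^ 2 = (Real.pi ^ 2 / 2) * (2 * k ^ 2 / Real.pi ^ 2 * S) := by
        field_simp
    _ ≤ (Real.pi ^ 2 / 2) * (W * η) := by nlinarith
    _ = Real.pi ^ 2 / 2 * W * η := by ring
end
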